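/- Let P be a substochastic matrix indexed by a finite set C (i.e., all entries nonnegative and every row sum at most 1), which is symmetric with nonnegative entries, and let λ be its largest eigenvalue. Then for every m ≥ 1, the maximum over x ∈ C of the sum over y of the (x,y) entry of P^m is at least λ^m and at most |C|^{1/2} · λ^m. -/

import Mathlib

open Matrix

section stmt0aux
variable {C : Type*} [Fintype C] [DecidableEq C]

lemma stmt0_pow_mulVec_eig (P : Matrix C C ℝ) {t : ℝ} {v : C → ℝ}
    (h : P *ᵥ v = t • v) (k : ℕ) : (P ^ k) *ᵥ v = t ^ k • v := by
  induction k with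
  | zero => simp
  | succ n ih =>
      rw [pow_succ', pow_succ', ← Matrix.mulVec_mulVec, ih, Matrix.mulVec_smul,
        h, smul_smul, mul_comm]

lemma stmt0_inner_pow (P : Matrix C C ℝ) (hH : P.IsHermitian) (k : ℕ) (i : C) (w : C → ℝ) :
    inner (𝕜 := ℝ) (hH.eigenvectorBasis i) ((WithLp.equiv 2 (C → ℝ)).symm ((P ^ k) *ᵥ w))
      = hH.eigenvalues i ^ k *
        inner (𝕜 := ℝ) (hH.eigenvectorBasis i) ((WithLp.equiv 2 (C → ℝ)).symm w) := by
  have hsym : (P ^ k)ᵀ = P ^ k := by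
    have := (hH.pow k).eq
    simpa [Matrix.conjTranspose_eq_transpose_of_trivial] using this
  simp only [PiLp.inner_apply, RCLike.inner_apply, conj_trivial, WithLp.equiv_symm_apply,
    PiLp.toLp_apply, mul_comm ((P ^ k *ᵥ w) _), mul_comm (w _)]
  calc ∑ x, (hH.eigenvectorBasis i) x * ((P ^ k) *ᵥ w) x
      = (⇑(hH.eigenvectorBasis i) ᵥ* (P ^ k)) ⬝ᵥ w := by
        rw [← Matrix.dotProduct_mulVec]; rfl
    _ = ((P ^ k) *ᵥ ⇑(hH.eigenvectorBasis i)) ⬝ᵥ w := by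
        rw [← hsym, Matrix.vecMul_transpose, hsym]
    _ = hH.eigenvalues i ^ k * ∑ x, (hH.eigenvectorBasis i) x * w x := by
        rw [stmt0_pow_mulVec_eig P (hH.mulVec_eigenvectorBasis i), smul_dotProduct]
        simp [dotProduct, mul_assoc]

lemma stmt0_rayleigh_le (P : Matrix C C ℝ) (hH : P.IsHermitian) {lam : ℝ}
    (hle : ∀ i, hH.eigenvalues i ≤ lam) (w : C → ℝ) :
    ∑ x, w x * (P *ᵥ w) x ≤ lam * ∑ x, (w x) ^ 2 := by
  have h1 : ∑ x, w x * (P *ᵥ w) x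
      = inner (𝕜 := ℝ) ((WithLp.equiv 2 (C → ℝ)).symm w)
          ((WithLp.equiv 2 (C → ℝ)).symm (P *ᵥ w)) := by
    simp [PiLp.inner_apply, mul_comm]
  have h2 : ∑ x, (w x) ^ 2 = inner (𝕜 := ℝ) ((WithLp.equiv 2 (C → ℝ)).symm w)
      ((WithLp.equiv 2 (C → ℝ)).symm w) := by
    simp only [PiLp.inner_apply, WithLp.equiv_symm_apply, PiLp.toLp_apply, RCLike.inner_apply,
      conj_trivial, sq]
  rw [h1, h2,
    ← (hH.eigenvectorBasis).sum_inner_mul_inner ((WithLp.equiv 2 (C → ℝ)).symm w)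
      ((WithLp.equiv 2 (C → ℝ)).symm (P *ᵥ w)),
    ← (hH.eigenvectorBasis).sum_inner_mul_inner ((WithLp.equiv 2 (C → ℝ)).symm w)
      ((WithLp.equiv 2 (C → ℝ)).symm w), Finset.mul_sum]
  apply Finset.sum_le_sum
  intro i _
  have hip := stmt0_inner_pow P hH 1 i w
  rw [pow_one, pow_one] at hip
  rw [hip, real_inner_comm ((WithLp.equiv 2 (C → ℝ)).symm w) (hH.eigenvectorBasis i)]
  have hsq : (0:ℝ) ≤ inner (𝕜 := ℝ) (hH.eigenvectorBasis i) ((WithLp.equiv 2 (C → ℝ)).symm w) *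
      inner (𝕜 := ℝ) (hH.eigenvectorBasis i) ((WithLp.equiv 2 (C → ℝ)).symm w) :=
    mul_self_nonneg _
  nlinarith [hle i]

lemma stmt0_norm_pow_le (P : Matrix C C ℝ) (hH : P.IsHermitian) {lam : ℝ}
    (habs : ∀ i, |hH.eigenvalues i| ≤ lam) (k : ℕ) (w : C → ℝ) :
    ∑ x, (((P ^ k) *ᵥ w) x) ^ 2 ≤ (lam ^ k) ^ 2 * ∑ x, (w x) ^ 2 := by
  have key : ∀ z : EuclideanSpace ℝ C, inner (𝕜 := ℝ) z z
      = ∑ i, (inner (𝕜 := ℝ) (hH.eigenvectorBasis i) z) ^ 2 := by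
    intro z
    rw [← (hH.eigenvectorBasis).sum_inner_mul_inner z z]
    refine Finset.sum_congr rfl fun i _ => ?_
    rw [real_inner_comm z (hH.eigenvectorBasis i), sq]
  have h1 : ∑ x, (((P ^ k) *ᵥ w) x) ^ 2
      = inner (𝕜 := ℝ) ((WithLp.equiv 2 (C → ℝ)).symm ((P ^ k) *ᵥ w))
          ((WithLp.equiv 2 (C → ℝ)).symm ((P ^ k) *ᵥ w)) := by
    simp only [PiLp.inner_apply, WithLp.equiv_symm_apply, PiLp.toLp_apply, RCLike.inner_apply,
      conj_trivial, sq]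
  have h2 : ∑ x, (w x) ^ 2 = inner (𝕜 := ℝ) ((WithLp.equiv 2 (C → ℝ)).symm w)
      ((WithLp.equiv 2 (C → ℝ)).symm w) := by
    simp only [PiLp.inner_apply, WithLp.equiv_symm_apply, PiLp.toLp_apply, RCLike.inner_apply,
      conj_trivial, sq]
  rw [h1, h2, key, key, Finset.mul_sum]
  apply Finset.sum_le_sum
  intro i _
  rw [stmt0_inner_pow P hH k i w]
  have hmu : (hH.eigenvalues i ^ k) ^ 2 ≤ (lam ^ k) ^ 2 := by
    rw [← pow_mul, ← pow_mul, mul_comm k 2, pow_mul, pow_mul]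
    apply pow_le_pow_left₀ (sq_nonneg _)
    nlinarith [habs i, le_abs_self (hH.eigenvalues i), neg_abs_le (hH.eigenvalues i)]
  have hsq := sq_nonneg (inner (𝕜 := ℝ) (hH.eigenvectorBasis i) ((WithLp.equiv 2 (C → ℝ)).symm w))
  nlinarith

lemma stmt0_pow_entry_nonneg (P : Matrix C C ℝ) (hnonneg : ∀ x y, 0 ≤ P x y) (k : ℕ) :
    ∀ x y, 0 ≤ (P ^ k) x y := by
  induction k with
  | zero => intro x y; by_cases h : x = y <;> simp [Matrix.one_apply, h]
  | succ n ih =>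
      intro x y
      rw [pow_succ, Matrix.mul_apply]
      exact Finset.sum_nonneg fun z _ => mul_nonneg (ih x z) (hnonneg z y)

end stmt0aux

/-- For a symmetric substochastic matrix `P` with nonnegative entries on a
nonempty finite index set `C`, with largest eigenvalue `lam`, for every `m ≥ 1` the maximum
row sum of `P ^ m` is between `lam ^ m` and `√|C| · lam ^ m`. -/
theorem stmt0 {C : Type*} [Fintype C] [Nonempty C] [DecidableEq C]
    (P : Matrix C C ℝ) (hsymm : P.IsSymm)
    (hnonneg : ∀ x y, 0 ≤ P x y) (hrow : ∀ x, ∑ y, P x y ≤ 1)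
    (lam : ℝ)
    (hlam : IsGreatest {t : ℝ | ∃ v : C → ℝ, v ≠ 0 ∧ P.mulVec v = t • v} lam)
    (m : ℕ) (hm : 1 ≤ m) :
    lam ^ m ≤ Finset.univ.sup' Finset.univ_nonempty (fun x => ∑ y, (P ^ m) x y) ∧
    Finset.univ.sup' Finset.univ_nonempty (fun x => ∑ y, (P ^ m) x y) ≤
      Real.sqrt (Fintype.card C) * lam ^ m := by
  have hH : P.IsHermitian := by
    rw [Matrix.IsHermitian, Matrix.conjTranspose_eq_transpose_of_trivial]
    simpa using hsymm.eq
  have hle : ∀ i, hH.eigenvalues i ≤ lam := by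
    intro i
    exact hlam.2 ⟨⇑(hH.eigenvectorBasis i),
      fun h => (hH.eigenvectorBasis.orthonormal.ne_zero i) (by ext x; exact congrFun h x),
      hH.mulVec_eigenvectorBasis i⟩
  have hray := stmt0_rayleigh_le P hH hle
  have hspec : ∀ t : ℝ, ∀ v : C → ℝ, v ≠ 0 → P *ᵥ v = t • v → |t| ≤ lam := by
    intro t v hv heig
    set w : C → ℝ := fun x => |v x| with hw
    have hPw : ∀ x, |t| * w x ≤ (P *ᵥ w) x := by
      intro x
      have h0 : |t| * w x = |(P *ᵥ v) x| := by
        rw [heig]; simp [hw, abs_mul, Pi.smul_apply, smul_eq_mul]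
      rw [h0]
      calc |(P *ᵥ v) x| = |∑ y, P x y * v y| := by rfl
        _ ≤ ∑ y, |P x y * v y| := Finset.abs_sum_le_sum_abs _ _
        _ = ∑ y, P x y * |v y| := by
            refine Finset.sum_congr rfl fun y _ => ?_
            rw [abs_mul, abs_of_nonneg (hnonneg x y)]
        _ = (P *ᵥ w) x := rfl
    have hkey : |t| * ∑ x, (w x) ^ 2 ≤ lam * ∑ x, (w x) ^ 2 := by
      calc |t| * ∑ x, (w x) ^ 2 = ∑ x, w x * (|t| * w x) := by
            rw [Finset.mul_sum]; exact Finset.sum_congr rfl fun x _ => by ring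
        _ ≤ ∑ x, w x * (P *ᵥ w) x :=
            Finset.sum_le_sum fun x _ => mul_le_mul_of_nonneg_left (hPw x) (abs_nonneg _)
        _ ≤ lam * ∑ x, (w x) ^ 2 := hray w
    have hpos : 0 < ∑ x, (w x) ^ 2 := by
      obtain ⟨x, hx⟩ := Function.ne_iff.mp hv
      exact Finset.sum_pos' (fun y _ => sq_nonneg _)
        ⟨x, Finset.mem_univ x, pow_pos (abs_pos.mpr hx) 2⟩
    exact le_of_mul_le_mul_right (by linarith [hkey]) hpos
  have habs : ∀ i, |hH.eigenvalues i| ≤ lam := fun i =>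
    hspec _ _ (fun h => (hH.eigenvectorBasis.orthonormal.ne_zero i)
      (by ext x; exact congrFun h x)) (hH.mulVec_eigenvectorBasis i)
  obtain ⟨v, hv0, hveig⟩ := hlam.1
  have hlam0 : 0 ≤ lam := by
    have h := hspec lam v hv0 hveig
    cases abs_cases lam with
    | inl h' => exact h'.2
    | inr h' => linarith [h, h'.1]
  have hlamm0 : 0 ≤ lam ^ m := pow_nonneg hlam0 m
  set M := Finset.univ.sup' Finset.univ_nonempty (fun x => ∑ y, (P ^ m) x y) with hM
  have hMrow : ∀ y, ∑ z, (P ^ m) y z ≤ M := fun y =>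
    Finset.le_sup' (fun x => ∑ y, (P ^ m) x y) (Finset.mem_univ y)
  have hsymm' : ∀ x y, (P ^ m) x y = (P ^ m) y x := by
    intro x y
    have h2 : (P ^ m)ᵀ = P ^ m := by simpa [Matrix.conjTranspose_eq_transpose_of_trivial] using (hH.pow m).eq
    conv_lhs => rw [← h2]
    rfl
  constructor
  · -- lower bound
    set w : C → ℝ := fun x => |v x| with hw
    have hPmv : (P ^ m) *ᵥ v = lam ^ m • v := stmt0_pow_mulVec_eig P hveig m
    have hPw : ∀ x, lam ^ m * w x ≤ ((P ^ m) *ᵥ w) x := by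
      intro x
      have h1 : lam ^ m * w x = |((P ^ m) *ᵥ v) x| := by
        rw [hPmv]
        simp [hw, abs_mul, Pi.smul_apply, smul_eq_mul, abs_of_nonneg hlamm0]
      rw [h1]
      calc |((P ^ m) *ᵥ v) x| = |∑ y, (P ^ m) x y * v y| := rfl
        _ ≤ ∑ y, |(P ^ m) x y * v y| := Finset.abs_sum_le_sum_abs _ _
        _ = ∑ y, (P ^ m) x y * |v y| := by
            refine Finset.sum_congr rfl fun y _ => ?_
            rw [abs_mul, abs_of_nonneg (stmt0_pow_entry_nonneg P hnonneg m x y)]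
        _ = ((P ^ m) *ᵥ w) x := rfl
    have hswap : ∑ x, ((P ^ m) *ᵥ w) x = ∑ y, (∑ x, (P ^ m) x y) * w y := by
      simp only [Matrix.mulVec, dotProduct, Finset.sum_mul]
      exact Finset.sum_comm
    have hsum : lam ^ m * ∑ x, w x ≤ M * ∑ x, w x := by
      calc lam ^ m * ∑ x, w x = ∑ x, lam ^ m * w x := by rw [Finset.mul_sum]
        _ ≤ ∑ x, ((P ^ m) *ᵥ w) x := Finset.sum_le_sum fun x _ => hPw x
        _ = ∑ y, (∑ x, (P ^ m) x y) * w y := hswap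
        _ = ∑ y, (∑ x, (P ^ m) y x) * w y :=
            Finset.sum_congr rfl fun y _ => by
              rw [Finset.sum_congr rfl fun x _ => hsymm' x y]
        _ ≤ ∑ y, M * w y := Finset.sum_le_sum fun y _ =>
            mul_le_mul_of_nonneg_right (hMrow y) (abs_nonneg _)
        _ = M * ∑ x, w x := by rw [Finset.mul_sum]
    have hwpos : 0 < ∑ x, w x := by
      obtain ⟨x, hx⟩ := Function.ne_iff.mp hv0
      exact Finset.sum_pos' (fun y _ => abs_nonneg _)
        ⟨x, Finset.mem_univ x, abs_pos.mpr hx⟩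
    exact le_of_mul_le_mul_right (by linarith [hsum]) hwpos
  · -- upper bound
    obtain ⟨x0, _, hx0⟩ := Finset.exists_mem_eq_sup' (s := (Finset.univ : Finset C))
      Finset.univ_nonempty (fun x => ∑ y, (P ^ m) x y)
    rw [← hM] at hx0
    have hM0 : 0 ≤ M := by
      rw [hx0]
      exact Finset.sum_nonneg fun y _ => stmt0_pow_entry_nonneg P hnonneg m x0 y
    have hMx0 : M = ((P ^ m) *ᵥ (fun _ => 1)) x0 := by
      rw [hx0]; simp [Matrix.mulVec, dotProduct]
    have hsq : M ^ 2 ≤ ∑ x, (((P ^ m) *ᵥ (fun _ => 1)) x) ^ 2 := by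
      rw [hMx0]
      exact Finset.single_le_sum (f := fun x => (((P ^ m) *ᵥ (fun _ => 1)) x) ^ 2)
        (fun x _ => sq_nonneg _) (Finset.mem_univ x0)
    have hnb := stmt0_norm_pow_le P hH habs m (fun _ => 1)
    have hcard : ∑ _x : C, ((1:ℝ)) ^ 2 = (Fintype.card C : ℝ) := by simp
    rw [hcard] at hnb
    have hfin : M ^ 2 ≤ (lam ^ m) ^ 2 * (Fintype.card C : ℝ) := le_trans hsq hnb
    have hMle : M ≤ Real.sqrt ((lam ^ m) ^ 2 * (Fintype.card C : ℝ)) :=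
      (Real.sqrt_sq hM0).symm.trans_le (Real.sqrt_le_sqrt hfin)
    calc M ≤ Real.sqrt ((lam ^ m) ^ 2 * (Fintype.card C : ℝ)) := hMle
      _ = Real.sqrt (Fintype.card C) * lam ^ m := by
          rw [mul_comm, Real.sqrt_mul (Nat.cast_nonneg _), Real.sqrt_sq hlamm0]
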